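/- Let γ = (γ_1,…,γ_n) be a weak composition and F ∈ SetSkyFill(γ) with content δ. Then for every 1 ≤ m ≤ n, Σ_{i=1}^m δ_i ≥ Σ_{i=1}^m γ_i (the values occurring in the first m rows are all at most m, and there are Σ_{i≤m} γ_i boxes there, each containing at least one entry). -/
import Mathlib


open Finset MvPolynomial

/-- The inversion-triple condition on anchor values `b, a, c`:
`b > c ≥ a` or `c ≥ a > b`. -/
def InvTriple (b a c : ℕ) : Prop := (c < b ∧ a ≤ c) ∨ (a ≤ c ∧ b < a)

/-- A set-valued skyline filling of shape `γ` (row `i : Fin n` is the `(i+1)`-st row) with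
basement `b_i = i`: box `(i, j)` for `1 ≤ j ≤ γ i` carries a nonempty finite set of positive
integers, box `(i, 0)` is the basement `{i + 1}`, and boxes outside the shape are empty. -/
structure SVFilling (n : ℕ) (γ : Fin n → ℕ) where
  box : Fin n → ℕ → Finset ℕ
  basement : ∀ i : Fin n, box i 0 = {(i : ℕ) + 1}
  nonempty : ∀ i : Fin n, ∀ j : ℕ, 1 ≤ j → j ≤ γ i → (box i j).Nonempty
  pos : ∀ i : Fin n, ∀ j : ℕ, ∀ e ∈ box i j, 1 ≤ e
  outside : ∀ i : Fin n, ∀ j : ℕ, γ i < j → box i j = ∅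

namespace SVFilling

variable {n : ℕ} {γ : Fin n → ℕ}

/-- The anchor (= largest) entry of box `(i, j)`. -/
def anchor (F : SVFilling n γ) (i : Fin n) (j : ℕ) : ℕ := (F.box i j).sup id

/-- Semistandardness conditions (S1)-(S4). -/
def IsSemistandard (F : SVFilling n γ) : Prop :=
  (∀ j : ℕ, 1 ≤ j → ∀ i i' : Fin n, i ≠ i' → ∀ e : ℕ, e ∈ F.box i j → e ∉ F.box i' j) ∧
  (∀ i : Fin n, ∀ j : ℕ, 1 ≤ j → j ≤ γ i →
      ∀ a ∈ F.box i (j - 1), ∀ b ∈ F.box i j, b ≤ a) ∧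
  (∀ i i' : Fin n, i < i' →
      (γ i' ≤ γ i → ∀ m : ℕ, m + 1 ≤ γ i' →
        InvTriple (F.anchor i' (m + 1)) (F.anchor i (m + 1)) (F.anchor i m)) ∧
      (γ i < γ i' → ∀ m : ℕ, m ≤ γ i → m + 1 ≤ γ i' →
        InvTriple (F.anchor i m) (F.anchor i' (m + 1)) (F.anchor i' m))) ∧
  (∀ i : Fin n, ∀ j : ℕ, 1 ≤ j → j ≤ γ i → ∀ e ∈ F.box i j, e ≠ F.anchor i j →
      ∀ i' : Fin n, i' < i → j ≤ γ i' →
        ¬ (e < F.anchor i' j ∧ (j = γ i' ∨ F.anchor i' (j + 1) ≤ e)))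

/-- `F.content v` is the number of (non-basement) boxes of `F` containing the value `v`. -/
def content (F : SVFilling n γ) (v : ℕ) : ℕ :=
  ∑ i : Fin n, ((Finset.Icc 1 (γ i)).filter (fun j => v ∈ F.box i j)).card

/-- `|F|`, the total number of entries of `F` (with multiplicity over boxes). -/
def size (F : SVFilling n γ) : ℕ :=
  ∑ i : Fin n, ∑ j ∈ Finset.Icc 1 (γ i), (F.box i j).card

/-- `F` has content the weak composition `δ` with `n` parts. -/
def HasContent (F : SVFilling n γ) (δ : Fin n → ℕ) : Prop :=
  (∀ i : Fin n, F.content ((i : ℕ) + 1) = δ i) ∧ ∀ v : ℕ, n < v → F.content v = 0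

end SVFilling

/-- The (combinatorial) Lascoux atom `L_γ ∈ ℤ[β][x_1, …, x_n]`, where `β` is the polynomial
variable of `ℤ[β] = Polynomial ℤ`. -/
noncomputable def Lascoux (n : ℕ) (γ : Fin n → ℕ) : MvPolynomial (Fin n) (Polynomial ℤ) :=
  ∑ᶠ F : {F : SVFilling n γ // F.IsSemistandard},
    MvPolynomial.monomial
      (Finsupp.equivFunOnFinite.symm
        (fun i : Fin n => (F : SVFilling n γ).content ((i : ℕ) + 1)))
      (Polynomial.X ^ ((F : SVFilling n γ).size - ∑ i, γ i))

/-- If `F` is a semistandard set-valued skyline filling of shape `γ` with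
content `δ`, then for every `1 ≤ m ≤ n` the sum of the first `m` parts of `δ` is at least
the sum of the first `m` parts of `γ`. -/
theorem stmt2 (n : ℕ) (hn : 1 ≤ n) (γ : Fin n → ℕ) (F : SVFilling n γ)
    (hF : F.IsSemistandard) (δ : Fin n → ℕ) (hδ : F.HasContent δ) :
    ∀ m : ℕ, 1 ≤ m → m ≤ n →
      ∑ i ∈ Finset.univ.filter (fun i : Fin n => (i : ℕ) < m), γ i ≤
        ∑ i ∈ Finset.univ.filter (fun i : Fin n => (i : ℕ) < m), δ i := by
  intro m hm1 hmn
  -- every entry in row i is at most i+1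
  have rowb : ∀ i : Fin n, ∀ j, j ≤ γ i → ∀ e ∈ F.box i j, e ≤ (i : ℕ) + 1 := by
    intro i j
    induction j with
    | zero =>
      intro _ e he
      rw [F.basement] at he
      simp only [Finset.mem_singleton] at he
      omega
    | succ j ih =>
      intro hj e he
      obtain ⟨a, ha⟩ : (F.box i j).Nonempty := by
        rcases Nat.eq_zero_or_pos j with h | h
        · subst h; rw [F.basement]; exact ⟨_, Finset.mem_singleton_self _⟩
        · exact F.nonempty i j h (by omega)
      have h1 := hF.2.1 i (j + 1) (by omega) hj a (by simpa using ha) e he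
      have h2 := ih (by omega) a ha
      omega
  set S := Finset.univ.filter (fun i : Fin n => (i : ℕ) < m) with hS
  have hδeq : ∀ i ∈ S, δ i = F.content ((i : ℕ) + 1) := fun i _ => (hδ.1 i).symm
  rw [Finset.sum_congr rfl hδeq]
  unfold SVFilling.content
  rw [Finset.sum_comm]
  have hsub : S ⊆ Finset.univ := Finset.subset_univ S
  calc ∑ i ∈ S, γ i
      ≤ ∑ i' ∈ S, ∑ i ∈ S,
          ((Finset.Icc 1 (γ i')).filter (fun j => (i : ℕ) + 1 ∈ F.box i' j)).card := by
        apply Finset.sum_le_sum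
        intro i' hi'
        have hi'm : (i' : ℕ) < m := by simpa [hS] using hi'
        have key : ∀ j ∈ Finset.Icc 1 (γ i'),
            1 ≤ ∑ i ∈ S, if (i : ℕ) + 1 ∈ F.box i' j then 1 else 0 := by
          intro j hj
          rw [Finset.mem_Icc] at hj
          obtain ⟨e, he⟩ := F.nonempty i' j hj.1 hj.2
          have hep := F.pos i' j e he
          have heb := rowb i' j hj.2 e he
          have hlt : e - 1 < n := by omega
          have hmem : (⟨e - 1, hlt⟩ : Fin n) ∈ S := by
            simp only [hS, Finset.mem_filter, Finset.mem_univ, true_and]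
            omega
          have := Finset.single_le_sum
            (f := fun i : Fin n => if (i : ℕ) + 1 ∈ F.box i' j then 1 else 0)
            (fun i _ => Nat.zero_le _) hmem
          have heq : (e - 1) + 1 = e := by omega
          simpa [heq, he] using this
        calc γ i' = ∑ j ∈ Finset.Icc 1 (γ i'), 1 := by simp
          _ ≤ ∑ j ∈ Finset.Icc 1 (γ i'), ∑ i ∈ S,
                if (i : ℕ) + 1 ∈ F.box i' j then 1 else 0 := Finset.sum_le_sum key
          _ = ∑ i ∈ S, ∑ j ∈ Finset.Icc 1 (γ i'),
                if (i : ℕ) + 1 ∈ F.box i' j then 1 else 0 := Finset.sum_comm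
          _ = ∑ i ∈ S,
              ((Finset.Icc 1 (γ i')).filter (fun j => (i : ℕ) + 1 ∈ F.box i' j)).card := by
            refine Finset.sum_congr rfl fun i _ => ?_
            rw [Finset.card_filter]
    _ ≤ ∑ i' : Fin n, ∑ i ∈ S,
          ((Finset.Icc 1 (γ i')).filter (fun j => (i : ℕ) + 1 ∈ F.box i' j)).card :=
        Finset.sum_le_sum_of_subset hsub
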